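/- Let f ∈ L¹(ℝ) be such that sgn(ξ) f(ξ) ∈ {0, 1} for almost every ξ ∈ ℝ, and suppose there exists a finite nonnegative Borel measure ν on ℝ such that for every φ ∈ C_c^∞(ℝ), −∫_ℝ f(ξ) φ'(ξ) dξ = φ(0) − ∫_ℝ φ dν. Then, with u := ∫_ℝ f(ξ) dξ, one has f(ξ) = χ(u,ξ) for almost every ξ ∈ ℝ. -/

import Mathlib

open MeasureTheory

/-- The kinetic function `χ(u,ξ)`: `+1` if `0 ≤ ξ ≤ u`, `-1` if `u ≤ ξ ≤ 0`,
and `0` otherwise. -/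
noncomputable def chi (u ξ : ℝ) : ℝ :=
  if 0 ≤ ξ ∧ ξ ≤ u then 1 else if u ≤ ξ ∧ ξ ≤ 0 then -1 else 0

open Set Filter Topology

/-- An integrable function cannot have modulus 1 a.e. on a set of infinite measure. -/
lemma tail_contradiction {f : ℝ → ℝ} (hf : Integrable f) {s : Set ℝ}
    (hs : MeasurableSet s) (hvol : volume s = ⊤)
    (h : ∀ᵐ ξ, ξ ∈ s → f ξ = 1 ∨ f ξ = -1) : False := by
  have h1 : Integrable (fun _ : ℝ => (1:ℝ)) (volume.restrict s) := by
    refine (hf.restrict (s := s)).mono aestronglyMeasurable_const ?_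
    rw [ae_restrict_iff' hs]
    filter_upwards [h] with ξ hξ hmem
    rcases hξ hmem with h' | h' <;> simp [h']
  rw [integrable_const_iff] at h1
  rcases h1 with h' | h'
  · exact one_ne_zero h'
  · have h'' := h'.measure_univ_lt_top
    rw [Measure.restrict_apply_univ, hvol] at h''
    exact (lt_irrefl _ h'').elim

/-- A bounded measurable function on `ℝ` is locally integrable. -/
lemma locallyIntegrable_of_bounded {g : ℝ → ℝ} (hg : Measurable g) {C : ℝ}
    (hC : ∀ x, |g x| ≤ C) : LocallyIntegrable g := by
  rw [locallyIntegrable_iff]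
  intro K hK
  refine Integrable.mono' (g := fun _ => C) (integrableOn_const hK.measure_lt_top.ne)
    hg.aestronglyMeasurable.restrict (ae_of_all _ fun x => ?_)
  simpa using hC x

/-- a.e. every real is different from a given point. -/
lemma ae_ne_point (a : ℝ) : ∀ᵐ ξ : ℝ, ξ ≠ a := by
  simp only [ae_iff, not_not, Set.setOf_eq_eq_singleton]
  exact measure_singleton a

/-- A smooth compactly supported function with zero integral has a smooth compactly
supported antiderivative. -/
lemma exists_antideriv {h : ℝ → ℝ} (hh : ContDiff ℝ (⊤ : ℕ∞) h)
    (hsupp : HasCompactSupport h) (hint : ∫ x, h x = 0) :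
    ∃ φ : ℝ → ℝ, ContDiff ℝ (⊤ : ℕ∞) φ ∧ HasCompactSupport φ ∧ deriv φ = h := by
  obtain ⟨R, hR⟩ : ∃ R : ℝ, tsupport h ⊆ Ioo (-R) R := by
    obtain ⟨r, hr⟩ := hsupp.isCompact.isBounded.subset_closedBall 0
    refine ⟨r + 1, fun x hx => ?_⟩
    have := hr hx
    simp only [Metric.mem_closedBall, Real.dist_eq, sub_zero] at this
    constructor <;> [nlinarith [abs_le.1 this]; nlinarith [abs_le.1 this]]
  set φ : ℝ → ℝ := fun x => ∫ t in (-R)..x, h t with hφdef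
  have hcont : Continuous h := hh.continuous
  have hDeriv : ∀ x, HasDerivAt φ (h x) x := fun x =>
    (hcont.integral_hasStrictDerivAt (-R) x).hasDerivAt
  have hderiv_eq : deriv φ = h := funext fun x => (hDeriv x).deriv
  have hdiff : Differentiable ℝ φ := fun x => (hDeriv x).differentiableAt
  refine ⟨φ, ?_, ?_, hderiv_eq⟩
  · rw [contDiff_infty_iff_deriv]
    exact ⟨hdiff, hderiv_eq ▸ hh⟩
  · apply HasCompactSupport.intro (isCompact_Icc (a := -R) (b := R))
    intro x hx
    simp only [mem_Icc, not_and_or, not_le] at hx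
    rcases hx with hx | hx
    · -- x < -R : integral of zero
      have : EqOn h 0 (uIcc (-R) x) := by
        intro t ht
        rw [uIcc_of_ge hx.le] at ht
        apply image_eq_zero_of_notMem_tsupport
        intro hmem
        exact absurd (hR hmem).1 (by linarith [ht.2])
      simp only [hφdef]
      rw [intervalIntegral.integral_congr this]
      simp
    · -- x > R : integral over everything = 0
      have : Function.support h ⊆ Ioc (-R) x :=
        (subset_tsupport h).trans
          (hR.trans (Ioo_subset_Ioc_self.trans (Ioc_subset_Ioc_right hx.le)))
      simp only [hφdef]
      rw [intervalIntegral.integral_eq_integral_of_support_subset this, hint]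


variable {ν : Measure ℝ} [IsFiniteMeasure ν]

lemma indicator_mul_integral (φ : ℝ → ℝ) (hφ1 : ContDiff ℝ 1 φ) (hφs : HasCompactSupport φ)
    (a : ℝ) : ∫ ξ, (if a ≤ ξ then deriv φ ξ else 0) = -φ a := by
  have h1 : (fun ξ => if a ≤ ξ then deriv φ ξ else 0) = (Ici a).indicator (deriv φ) := by
    funext ξ; simp [Set.indicator, Set.mem_Ici]
  rw [h1, integral_indicator measurableSet_Ici, integral_Ici_eq_integral_Ioi,
    hφs.integral_Ioi_deriv_eq hφ1 a]

lemma fubini_part (φ : ℝ → ℝ) (hφ1 : ContDiff ℝ 1 φ) (hφs : HasCompactSupport φ) :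
    ∫ ξ, (ν (Iic ξ)).toReal * deriv φ ξ = -∫ y, φ y ∂ν := by
  have hderiv_cont : Continuous (deriv φ) := hφ1.continuous_deriv le_rfl
  have hderiv_int : Integrable (deriv φ) :=
    hderiv_cont.integrable_of_hasCompactSupport hφs.deriv
  set F : ℝ → ℝ → ℝ := fun ξ y => if y ≤ ξ then deriv φ ξ else 0 with hF
  have hFmeas : AEStronglyMeasurable (Function.uncurry F) (volume.prod ν) := by
    have : Function.uncurry F =
        Set.indicator {p : ℝ × ℝ | p.2 ≤ p.1} (fun p => deriv φ p.1) := by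
      funext p
      simp only [Function.uncurry, Set.indicator, Set.mem_setOf_eq, hF]
    rw [this]
    exact ((hderiv_cont.measurable.comp measurable_fst).indicator
      (measurableSet_le measurable_snd measurable_fst)).aestronglyMeasurable
  have hFint : Integrable (Function.uncurry F) (volume.prod ν) := by
    refine Integrable.mono' (g := fun z : ℝ × ℝ => ‖deriv φ z.1‖ * 1)
      (hderiv_int.norm.mul_prod (integrable_const 1)) hFmeas (ae_of_all _ fun z => ?_)
    simp only [Function.uncurry, hF, mul_one]
    split_ifs <;> simp
  have step1 : ∀ ξ, (ν (Iic ξ)).toReal * deriv φ ξ = ∫ y, F ξ y ∂ν := by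
    intro ξ
    have : (fun y => F ξ y) = (Iic ξ).indicator (fun _ => deriv φ ξ) := by
      funext y; simp [hF, Set.indicator, Set.mem_Iic]
    rw [this, integral_indicator_const _ measurableSet_Iic, smul_eq_mul, measureReal_def]
  calc ∫ ξ, (ν (Iic ξ)).toReal * deriv φ ξ = ∫ ξ, ∫ y, F ξ y ∂ν := by
        simp only [step1]
    _ = ∫ y, (∫ ξ, F ξ y) ∂ν := integral_integral_swap hFint
    _ = ∫ y, -φ y ∂ν := by
        have h2 : ∀ y, (∫ ξ, F ξ y) = -φ y := fun y => indicator_mul_integral φ hφ1 hφs y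
        simp only [h2]
    _ = -∫ y, φ y ∂ν := by rw [integral_neg]

lemma representation (f : ℝ → ℝ) (hf : Integrable f)
    (hweak : ∀ φ : ℝ → ℝ, ContDiff ℝ (⊤ : ℕ∞) φ → HasCompactSupport φ →
      -∫ ξ : ℝ, f ξ * deriv φ ξ = φ 0 - ∫ ξ : ℝ, φ ξ ∂ν) :
    ∃ k : ℝ, ∀ᵐ ξ : ℝ, f ξ =
      (if 0 ≤ ξ then 1 else 0) - (ν (Iic ξ)).toReal + k := by
  set N : ℝ → ℝ := fun ξ => (ν (Iic ξ)).toReal with hN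
  set g : ℝ → ℝ := fun ξ => (if 0 ≤ ξ then 1 else 0) - N ξ with hg
  have hNmono : Monotone N := fun a b hab =>
    ENNReal.toReal_mono (measure_ne_top ν _) (measure_mono (Iic_subset_Iic.2 hab))
  have hNmeas : Measurable N := hNmono.measurable
  have hNnonneg : ∀ ξ, 0 ≤ N ξ := fun ξ => ENNReal.toReal_nonneg
  have hNbdd : ∀ ξ, N ξ ≤ (ν univ).toReal := fun ξ =>
    ENNReal.toReal_mono (measure_ne_top ν _) (measure_mono (subset_univ _))
  have hgmeas : Measurable g := by
    apply Measurable.sub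
    · exact measurable_const.ite measurableSet_Ici measurable_const
    · exact hNmeas
  have hgbdd : ∀ ξ, |g ξ| ≤ 1 + (ν univ).toReal := by
    intro ξ
    have h1 : |if 0 ≤ ξ then (1:ℝ) else 0| ≤ 1 := by split_ifs <;> simp
    have h2 : |N ξ| ≤ (ν univ).toReal := by
      rw [abs_of_nonneg (hNnonneg ξ)]; exact hNbdd ξ
    calc |g ξ| ≤ |if 0 ≤ ξ then (1:ℝ) else 0| + |N ξ| := abs_sub _ _
      _ ≤ 1 + (ν univ).toReal := add_le_add h1 h2
  have hgloc : LocallyIntegrable g := locallyIntegrable_of_bounded hgmeas hgbdd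
  -- key identity
  have key : ∀ φ : ℝ → ℝ, ContDiff ℝ (⊤ : ℕ∞) φ → HasCompactSupport φ →
      ∫ ξ, f ξ * deriv φ ξ = ∫ ξ, g ξ * deriv φ ξ := by
    intro φ hφ hφs
    have hφ1 : ContDiff ℝ 1 φ := hφ.of_le (by exact_mod_cast le_top)
    have hderiv_cont : Continuous (deriv φ) := hφ1.continuous_deriv le_rfl
    have hderiv_int : Integrable (deriv φ) :=
      hderiv_cont.integrable_of_hasCompactSupport hφs.deriv
    have hA : ∫ ξ, (if 0 ≤ ξ then (1:ℝ) else 0) * deriv φ ξ = -φ 0 := by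
      have e : ∀ ξ, (if 0 ≤ ξ then (1:ℝ) else 0) * deriv φ ξ
          = if 0 ≤ ξ then deriv φ ξ else 0 := by
        intro ξ; split_ifs <;> simp
      simp only [e]
      exact indicator_mul_integral φ hφ1 hφs 0
    have hB : ∫ ξ, N ξ * deriv φ ξ = -∫ y, φ y ∂ν := fubini_part (ν := ν) φ hφ1 hφs
    have hint1 : Integrable (fun ξ => (if 0 ≤ ξ then (1:ℝ) else 0) * deriv φ ξ) := by
      refine hderiv_int.bdd_mul (c := 1)
        ((measurable_const.ite measurableSet_Ici measurable_const).aestronglyMeasurable)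
        (ae_of_all _ fun ξ => ?_)
      split_ifs <;> simp
    have hint2 : Integrable (fun ξ => N ξ * deriv φ ξ) := by
      refine hderiv_int.bdd_mul (c := (ν univ).toReal) hNmeas.aestronglyMeasurable
        (ae_of_all _ fun ξ => ?_)
      rw [Real.norm_eq_abs, abs_of_nonneg (hNnonneg ξ)]; exact hNbdd ξ
    have hgsplit : ∫ ξ, g ξ * deriv φ ξ
        = (∫ ξ, (if 0 ≤ ξ then (1:ℝ) else 0) * deriv φ ξ) - ∫ ξ, N ξ * deriv φ ξ := by
      rw [← integral_sub hint1 hint2]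
      congr 1; funext ξ; simp only [hg]; ring
    have hfw := hweak φ hφ hφs
    have e2 : ∫ ξ, f ξ * deriv φ ξ = (∫ ξ, φ ξ ∂ν) - φ 0 := by linarith
    rw [e2, hgsplit, hA, hB]; ring
  -- bump function
  have θ : ContDiffBump (0:ℝ) := ⟨1, 2, one_pos, one_lt_two⟩
  set θn : ℝ → ℝ := θ.normed volume with hθn
  have hθsmooth : ContDiff ℝ (⊤ : ℕ∞) θn := θ.contDiff_normed
  have hθsupp : HasCompactSupport θn := θ.hasCompactSupport_normed
  have hθint_one : ∫ x, θn x = 1 := θ.integral_normed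
  have hθint : Integrable θn := hθsmooth.continuous.integrable_of_hasCompactSupport hθsupp
  -- integrability of ψ * (f - g) for continuous compactly supported ψ
  have hfg_int : ∀ ψ : ℝ → ℝ, Continuous ψ → HasCompactSupport ψ →
      Integrable (fun ξ => ψ ξ * (f ξ - g ξ)) := by
    intro ψ hψc hψs
    have hψint : Integrable ψ := hψc.integrable_of_hasCompactSupport hψs
    obtain ⟨C, hC⟩ := hψc.bounded_above_of_compact_support hψs
    have h1 : Integrable (fun ξ => ψ ξ * f ξ) :=
      hf.bdd_mul (c := C) hψc.aestronglyMeasurable (ae_of_all _ fun ξ => hC ξ)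
    have h2 : Integrable (fun ξ => g ξ * ψ ξ) := by
      refine hψint.bdd_mul (c := 1 + (ν univ).toReal) hgmeas.aestronglyMeasurable
        (ae_of_all _ fun ξ => ?_)
      simpa using hgbdd ξ
    have h2' : Integrable (fun ξ => ψ ξ * g ξ) := by
      simpa [mul_comm] using h2
    simpa [mul_sub] using (h1.sub h2' : Integrable (fun ξ => ψ ξ * f ξ - ψ ξ * g ξ))
  set k : ℝ := ∫ ξ, θn ξ * (f ξ - g ξ) with hk
  refine ⟨k, ?_⟩
  have main : ∀ᵐ ξ : ℝ, f ξ - g ξ - k = 0 := by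
    apply ae_eq_zero_of_integral_contDiff_smul_eq_zero
    · exact (hf.locallyIntegrable.sub hgloc).sub (locallyIntegrable_const k)
    · intro ψ hψ hψs
      have hψc : Continuous ψ := hψ.continuous
      set c : ℝ := ∫ x, ψ x with hc
      set h₀ : ℝ → ℝ := fun x => ψ x - c * θn x with hh₀
      have hψint : Integrable ψ := hψc.integrable_of_hasCompactSupport hψs
      have hψ' : ContDiff ℝ (⊤ : ℕ∞) ψ := hψ
      have hh₀smooth : ContDiff ℝ (⊤ : ℕ∞) h₀ := hψ'.sub (contDiff_const.mul hθsmooth)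
      have hcθ : HasCompactSupport (fun x => c * θn x) := hθsupp.mul_left
      have hh₀supp : HasCompactSupport h₀ := by
        apply HasCompactSupport.intro (hψs.isCompact.union hcθ.isCompact)
        intro x hx
        simp only [Set.mem_union, not_or] at hx
        simp only [hh₀, image_eq_zero_of_notMem_tsupport hx.1,
          image_eq_zero_of_notMem_tsupport hx.2, sub_zero]
      have hh₀c : Continuous h₀ := hh₀smooth.continuous
      have hh₀int : ∫ x, h₀ x = 0 := by
        simp only [hh₀]
        rw [integral_sub hψint (hθint.const_mul c), integral_const_mul, hθint_one]
        simp [hc]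
      obtain ⟨Φ, hΦsmooth, hΦsupp, hΦderiv⟩ := exists_antideriv hh₀smooth hh₀supp hh₀int
      have hkey := key Φ hΦsmooth hΦsupp
      -- ∫ h₀ (f - g) = 0
      have hΦ1 : ContDiff ℝ 1 Φ := hΦsmooth.of_le (by exact_mod_cast le_top)
      have hdΦc : Continuous (deriv Φ) := hΦ1.continuous_deriv le_rfl
      have hdΦint : Integrable (deriv Φ) :=
        hdΦc.integrable_of_hasCompactSupport hΦsupp.deriv
      obtain ⟨C, hC⟩ := hdΦc.bounded_above_of_compact_support hΦsupp.deriv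
      have int_f : Integrable (fun ξ => f ξ * deriv Φ ξ) := by
        have := hf.bdd_mul (c := C) hdΦc.aestronglyMeasurable (ae_of_all _ fun ξ => hC ξ)
        simpa [mul_comm] using this
      have int_g : Integrable (fun ξ => g ξ * deriv Φ ξ) := by
        refine hdΦint.bdd_mul (c := 1 + (ν univ).toReal) hgmeas.aestronglyMeasurable
          (ae_of_all _ fun ξ => ?_)
        simpa using hgbdd ξ
      have hzero : ∫ ξ, h₀ ξ * (f ξ - g ξ) = 0 := by
        have e1 : ∀ ξ, h₀ ξ * (f ξ - g ξ) = f ξ * deriv Φ ξ - g ξ * deriv Φ ξ := by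
          intro ξ; rw [hΦderiv]; ring
        simp only [e1]
        rw [integral_sub int_f int_g, hkey, sub_self]
      -- conclude
      have expand : ∀ ξ, ψ ξ • (f ξ - g ξ - k)
          = (h₀ ξ * (f ξ - g ξ) + c * (θn ξ * (f ξ - g ξ))) - ψ ξ * k := by
        intro ξ; simp only [hh₀, smul_eq_mul]; ring
      simp only [expand]
      have i1 : Integrable (fun ξ => h₀ ξ * (f ξ - g ξ)) := hfg_int h₀ hh₀c hh₀supp
      have i2 : Integrable (fun ξ => θn ξ * (f ξ - g ξ)) :=
        hfg_int θn hθsmooth.continuous hθsupp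
      have iA : Integrable (fun ξ => h₀ ξ * (f ξ - g ξ) + c * (θn ξ * (f ξ - g ξ))) :=
        i1.add (i2.const_mul c)
      rw [integral_sub iA (hψint.mul_const k),
        integral_add i1 (i2.const_mul c), hzero, integral_const_mul, MeasureTheory.integral_mul_const]
      simp only [← hk, ← hc]
      ring
  filter_upwards [main] with ξ hξ
  simp only [hg] at hξ
  linarith [hξ]

lemma integral_chi (u : ℝ) : ∫ ξ, chi u ξ = u := by
  rcases le_or_gt 0 u with hu | hu
  · have e : (fun ξ => chi u ξ) = (Icc 0 u).indicator (fun _ => (1:ℝ)) := by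
      funext ξ
      by_cases h : 0 ≤ ξ ∧ ξ ≤ u
      · simp only [chi]
        rw [if_pos h, indicator_of_mem (mem_Icc.2 h)]
      · have h2 : ¬(u ≤ ξ ∧ ξ ≤ 0) := by
          rintro ⟨ha, hb⟩
          exact h ⟨by linarith, by linarith⟩
        simp only [chi]
        rw [if_neg h, if_neg h2, indicator_of_notMem (by simpa [mem_Icc] using h)]
    rw [e, integral_indicator_const _ measurableSet_Icc, measureReal_def, Real.volume_Icc, smul_eq_mul,
      mul_one, ENNReal.toReal_ofReal (by linarith : (0:ℝ) ≤ u - 0), sub_zero]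
  · have e : (fun ξ => chi u ξ) = (Icc u 0).indicator (fun _ => (-1:ℝ)) := by
      funext ξ
      by_cases h : u ≤ ξ ∧ ξ ≤ 0
      · have h1 : ¬(0 ≤ ξ ∧ ξ ≤ u) := by
          rintro ⟨ha, hb⟩
          linarith
        simp only [chi]
        rw [if_neg h1, if_pos h, indicator_of_mem (mem_Icc.2 h)]
      · have h1 : ¬(0 ≤ ξ ∧ ξ ≤ u) := by
          rintro ⟨ha, hb⟩
          linarith
        simp only [chi]
        rw [if_neg h1, if_neg h, indicator_of_notMem (by simpa [mem_Icc] using h)]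
    rw [e, integral_indicator_const _ measurableSet_Icc, measureReal_def, Real.volume_Icc, smul_eq_mul,
      ENNReal.toReal_ofReal (by linarith : (0:ℝ) ≤ 0 - u)]
    ring

/-- If `f ∈ L¹(ℝ)` satisfies `sgn(ξ) f(ξ) ∈ {0,1}` a.e. and there is a
finite nonnegative Borel measure `ν` on `ℝ` such that for every `φ ∈ C_c^∞(ℝ)`,
`-∫ f φ' = φ(0) - ∫ φ dν`, then `f(ξ) = χ(u,ξ)` a.e., where `u := ∫ f`. -/
theorem stmt10 (f : ℝ → ℝ) (hf : Integrable f)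
    (hsgn : ∀ᵐ ξ : ℝ, Real.sign ξ * f ξ = 0 ∨ Real.sign ξ * f ξ = 1)
    (ν : Measure ℝ) (hν : IsFiniteMeasure ν)
    (hweak : ∀ φ : ℝ → ℝ, ContDiff ℝ (⊤ : ℕ∞) φ → HasCompactSupport φ →
      -∫ ξ : ℝ, f ξ * deriv φ ξ = φ 0 - ∫ ξ : ℝ, φ ξ ∂ν) :
    ∀ᵐ ξ : ℝ, f ξ = chi (∫ ξ' : ℝ, f ξ') ξ := by
  haveI := hν
  obtain ⟨k, hfg⟩ := representation f hf hweak
  set N : ℝ → ℝ := fun ξ => (ν (Iic ξ)).toReal with hN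
  have hfgN : ∀ᵐ ξ : ℝ, f ξ = (if 0 ≤ ξ then 1 else 0) - N ξ + k := hfg
  have hNmono : Monotone N := fun a b hab =>
    ENNReal.toReal_mono (measure_ne_top ν _) (measure_mono (Iic_subset_Iic.2 hab))
  have hNnonneg : ∀ ξ, 0 ≤ N ξ := fun ξ => ENNReal.toReal_nonneg
  have hNbdd : ∀ ξ, N ξ ≤ (ν univ).toReal := fun ξ =>
    ENNReal.toReal_mono (measure_ne_top ν _) (measure_mono (subset_univ _))
  -- limits of N
  have hTop : Tendsto N atTop (𝓝 (ν univ).toReal) :=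
    (ENNReal.tendsto_toReal (measure_ne_top ν _)).comp (tendsto_measure_Iic_atTop ν)
  have hBot : Tendsto N atBot (𝓝 0) := by
    have h1 : Tendsto (fun x : ℝ => ν (Iic x)) atBot (𝓝 (ν (⋂ x : ℝ, Iic x))) :=
      tendsto_measure_iInter_atBot (fun x => measurableSet_Iic.nullMeasurableSet)
        (fun a b hab => Iic_subset_Iic.2 hab) ⟨0, measure_ne_top ν _⟩
    have h2 : (⋂ x : ℝ, Iic x) = ∅ := by
      ext y
      simp only [mem_iInter, mem_Iic, mem_empty_iff_false, iff_false, not_forall, not_le]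
      exact ⟨y - 1, by linarith⟩
    rw [h2, measure_empty] at h1
    have h3 := (ENNReal.tendsto_toReal (by simp)).comp h1
    rw [ENNReal.toReal_zero] at h3
    exact h3
  -- a.e. constraint on N
  have haeN : ∀ᵐ ξ : ℝ, N ξ = k ∨ N ξ = k + 1 := by
    filter_upwards [hsgn, hfgN, ae_ne_point (0:ℝ)] with ξ h1 h2 h3
    rcases lt_or_gt_of_ne h3 with hneg | hpos
    · rw [Real.sign_of_neg hneg] at h1
      rw [if_neg (not_le.2 hneg)] at h2
      rcases h1 with h | h
      · left; linarith
      · right; linarith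
    · rw [Real.sign_of_pos hpos] at h1
      rw [if_pos hpos.le] at h2
      rcases h1 with h | h
      · right; linarith
      · left; linarith
  have pick : ∀ s : Set ℝ, volume s ≠ 0 → ∃ ξ ∈ s, N ξ = k ∨ N ξ = k + 1 := by
    intro s h0
    obtain ⟨ξ, hmem, hp⟩ :=
      MeasureTheory.Measure.exists_mem_of_measure_ne_zero_of_ae h0 (ae_restrict_of_ae haeN)
    exact ⟨ξ, hmem, hp⟩
  -- k = 0 or k = -1
  have hk : k = 0 ∨ k = -1 := by
    by_contra hcon
    push_neg at hcon
    obtain ⟨hk0, hk1⟩ := hcon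
    have hε : (0:ℝ) < min |k| |k + 1| :=
      lt_min (abs_pos.2 hk0) (abs_pos.2 fun h => hk1 (by linarith))
    have hev := Metric.tendsto_nhds.mp hBot _ hε
    obtain ⟨a, ha⟩ := eventually_atBot.1 hev
    obtain ⟨ξ, hmem, hp⟩ := pick (Iic a) (by simp [Real.volume_Iic])
    have hd := ha ξ hmem
    rw [Real.dist_eq, sub_zero] at hd
    rcases hp with h | h <;> rw [h] at hd
    · linarith [min_le_left |k| |k+1|]
    · linarith [min_le_right |k| |k+1|]
  rcases hk with hk0 | hkm1
  swap
  · -- k = -1 : contradiction with integrability on (-∞, 0)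
    exfalso
    have hNzero : ∀ᵐ ξ : ℝ, N ξ = 0 := by
      filter_upwards [haeN] with ξ h
      rcases h with h | h
      · exact absurd (hNnonneg ξ) (by rw [h, hkm1]; norm_num)
      · rw [h, hkm1]; ring
    refine tail_contradiction hf (measurableSet_Iio (a := (0:ℝ))) (by simp) ?_
    filter_upwards [hfgN, hNzero] with ξ h1 h2 hmem
    right
    rw [if_neg (not_le.2 hmem)] at h1
    rw [h1, h2, hkm1]; ring
  -- now k = 0
  subst hk0
  simp only [zero_add, add_zero] at haeN hfgN pick
  -- total mass is 0 or 1
  have hv : (ν univ).toReal = 0 ∨ (ν univ).toReal = 1 := by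
    set v := (ν univ).toReal with hvdef
    by_contra hcon
    push_neg at hcon
    obtain ⟨hv0, hv1⟩ := hcon
    have hε : (0:ℝ) < min |v| |v - 1| :=
      lt_min (abs_pos.2 hv0) (abs_pos.2 (sub_ne_zero.2 hv1))
    have hev := Metric.tendsto_nhds.mp hTop _ hε
    obtain ⟨a, ha⟩ := eventually_atTop.1 hev
    obtain ⟨ξ, hmem, hp⟩ := pick (Ici a) (by simp [Real.volume_Ici])
    have hd := ha ξ hmem
    rw [Real.dist_eq] at hd
    rcases hp with h | h <;> rw [h] at hd
    · rw [zero_sub, abs_neg] at hd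
      linarith [min_le_left |v| |v-1|]
    · rw [abs_sub_comm] at hd
      linarith [min_le_right |v| |v-1|]
  rcases hv with hv0 | hv1
  · -- total mass 0 : contradiction with integrability on (0, ∞)
    exfalso
    have hNall : ∀ ξ, N ξ = 0 := fun ξ => le_antisymm (hv0 ▸ hNbdd ξ) (hNnonneg ξ)
    refine tail_contradiction hf (measurableSet_Ioi (a := (0:ℝ))) (by simp) ?_
    filter_upwards [hfgN] with ξ h1 hmem
    left
    rw [if_pos (le_of_lt hmem), hNall ξ] at h1
    rw [h1]; ring
  -- total mass 1 : the threshold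
  have hSne : {ξ : ℝ | N ξ = 0}.Nonempty := by
    have hev := Metric.tendsto_nhds.mp hBot _ (by norm_num : (0:ℝ) < 1/2)
    obtain ⟨a, ha⟩ := eventually_atBot.1 hev
    obtain ⟨ξ, hmem, hp⟩ := pick (Iic a) (by simp [Real.volume_Iic])
    rcases hp with h | h
    · exact ⟨ξ, h⟩
    · have hd := ha ξ hmem
      rw [Real.dist_eq, sub_zero, h] at hd
      norm_num at hd
  have hSbdd : BddAbove {ξ : ℝ | N ξ = 0} := by
    have hev := Metric.tendsto_nhds.mp hTop _ (by norm_num : (0:ℝ) < 1/2)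
    obtain ⟨b, hb⟩ := eventually_atTop.1 hev
    refine ⟨b, fun ξ hξ => ?_⟩
    by_contra hcontra
    push_neg at hcontra
    have hd := hb ξ hcontra.le
    rw [Real.dist_eq, hξ, hv1, zero_sub, abs_neg] at hd
    norm_num at hd
  set u' := sSup {ξ : ℝ | N ξ = 0} with hu'
  have hlt : ∀ ξ, ξ < u' → N ξ = 0 := by
    intro ξ h
    obtain ⟨ξ', hξ'S, hlt'⟩ := exists_lt_of_lt_csSup hSne h
    exact le_antisymm (hξ'S ▸ hNmono hlt'.le) (hNnonneg ξ)
  have hgt : ∀ ξ, u' < ξ → N ξ ≠ 0 := fun ξ h hN0 =>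
    absurd (le_csSup hSbdd hN0) (not_le.2 h)
  have final : ∀ᵐ ξ : ℝ, f ξ = chi u' ξ := by
    filter_upwards [hfgN, haeN, ae_ne_point (0:ℝ), ae_ne_point u'] with ξ h1 h2 h3 h4
    rcases lt_or_gt_of_ne h4 with hξu | hξu
    · have hNξ : N ξ = 0 := hlt ξ hξu
      rcases lt_or_gt_of_ne h3 with hξ0 | hξ0
      · -- ξ < 0, ξ < u' : f = 0, chi = 0
        rw [if_neg (not_le.2 hξ0), hNξ] at h1
        simp only [chi]
        rw [if_neg (fun hc => absurd hc.1 (not_le.2 hξ0)),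
          if_neg (fun hc => absurd hc.1 (not_le.2 hξu))]
        rw [h1]; ring
      · -- 0 < ξ < u' : f = 1, chi = 1
        rw [if_pos hξ0.le, hNξ] at h1
        simp only [chi]
        rw [if_pos ⟨hξ0.le, hξu.le⟩]
        rw [h1]; ring
    · have hNξ : N ξ = 1 := by
        rcases h2 with h | h
        · exact absurd h (hgt ξ hξu)
        · exact h
      rcases lt_or_gt_of_ne h3 with hξ0 | hξ0
      · -- u' < ξ < 0 : f = -1, chi = -1
        rw [if_neg (not_le.2 hξ0), hNξ] at h1
        simp only [chi]
        rw [if_neg (fun hc => absurd hc.1 (not_le.2 hξ0)), if_pos ⟨hξu.le, hξ0.le⟩]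
        rw [h1]; ring
      · -- u' < ξ, 0 < ξ : f = 0, chi = 0
        rw [if_pos hξ0.le, hNξ] at h1
        simp only [chi]
        rw [if_neg (fun hc => absurd hc.2 (not_le.2 hξu)),
          if_neg (fun hc => absurd hc.2 (not_le.2 hξ0))]
        rw [h1]; ring
  have hu : ∫ ξ' : ℝ, f ξ' = u' := by
    rw [integral_congr_ae final, integral_chi]
  rw [hu]
  exact final
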